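/- Let F = ℂ(x) be the field of rational functions in one variable over ℂ. Let D be an m × k matrix with entries in F and let Y be a column vector in F^m. Suppose there exists an infinite subset S ⊆ ℂ such that every entry of D and every entry of Y has no pole at any point of S, and such that for every c ∈ S the evaluated linear system D(c)·X' = Y(c) has exactly one solution X' ∈ ℂ^k. Then there exists exactly one vector X ∈ F^k with D·X = Y. -/

import Mathlib

/-- A rational function `f ∈ ℂ(x)` has no pole at `c ∈ ℂ` if it can be written as `p/q`
with `p, q` polynomials and `q(c) ≠ 0`. -/
def HasNoPoleAt (f : RatFunc ℂ) (c : ℂ) : Prop :=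
  ∃ p q : Polynomial ℂ, Polynomial.eval c q ≠ 0 ∧
    f = algebraMap (Polynomial ℂ) (RatFunc ℂ) p / algebraMap (Polynomial ℂ) (RatFunc ℂ) q

/-- Evaluation of a rational function at a point `c ∈ ℂ` (equal to `p(c)/q(c)` whenever
`f = p/q` has no pole at `c`). -/
noncomputable def evalAt (c : ℂ) (f : RatFunc ℂ) : ℂ :=
  RatFunc.eval (RingHom.id ℂ) c f

lemma algMap_inj : Function.Injective (algebraMap (Polynomial ℂ) (RatFunc ℂ)) :=
  RatFunc.algebraMap_injective ℂ

lemma num_eq_mul_denom (f : RatFunc ℂ) :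
    algebraMap (Polynomial ℂ) (RatFunc ℂ) f.num
      = f * algebraMap (Polynomial ℂ) (RatFunc ℂ) f.denom :=
  (div_eq_iff (RatFunc.algebraMap_ne_zero f.denom_ne_zero)).mp f.num_div_denom

lemma denom_eval_ne_zero {f : RatFunc ℂ} {c : ℂ} (h : HasNoPoleAt f c) :
    f.denom.eval c ≠ 0 := by
  obtain ⟨p, q, hq, hf⟩ := h
  have hq0 : q ≠ 0 := fun h0 => hq (by simp [h0])
  have h2 : algebraMap (Polynomial ℂ) (RatFunc ℂ) q ≠ 0 :=
    RatFunc.algebraMap_ne_zero hq0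
  have hfq : f * algebraMap (Polynomial ℂ) (RatFunc ℂ) q
      = algebraMap (Polynomial ℂ) (RatFunc ℂ) p := by
    rw [hf]; exact div_mul_cancel₀ _ h2
  have key : f.num * q = f.denom * p := by
    apply algMap_inj
    rw [map_mul, map_mul, num_eq_mul_denom]
    rw [show f * algebraMap (Polynomial ℂ) (RatFunc ℂ) f.denom
          * algebraMap (Polynomial ℂ) (RatFunc ℂ) q
        = algebraMap (Polynomial ℂ) (RatFunc ℂ) f.denom
          * (f * algebraMap (Polynomial ℂ) (RatFunc ℂ) q) by ring, hfq]
  have hdvd : f.denom ∣ q :=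
    (f.isCoprime_num_denom.symm).dvd_of_dvd_mul_left ⟨p, key⟩
  obtain ⟨s, hs⟩ := hdvd
  intro h0
  apply hq
  rw [hs, Polynomial.eval_mul, h0, zero_mul]

lemma evalAt_eq (c : ℂ) (f : RatFunc ℂ) :
    evalAt c f = f.num.eval c / f.denom.eval c := rfl

lemma clear_denom {f : RatFunc ℂ} {q : Polynomial ℂ} (hdvd : f.denom ∣ q) :
    ∃ a : Polynomial ℂ, (algebraMap (Polynomial ℂ) (RatFunc ℂ) a
        = f * algebraMap (Polynomial ℂ) (RatFunc ℂ) q) ∧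
      ∀ c : ℂ, f.denom.eval c ≠ 0 → a.eval c = q.eval c * evalAt c f := by
  obtain ⟨r, hr⟩ := hdvd
  refine ⟨f.num * r, ?_, ?_⟩
  · rw [map_mul, num_eq_mul_denom, hr, map_mul]; ring
  · intro c hc
    rw [evalAt_eq, hr]
    simp only [Polynomial.eval_mul]
    field_simp

theorem stmt0 (m k : ℕ) (D : Matrix (Fin m) (Fin k) (RatFunc ℂ)) (Y : Fin m → RatFunc ℂ)
    (S : Set ℂ) (hS : S.Infinite)
    (hD : ∀ c ∈ S, ∀ i j, HasNoPoleAt (D i j) c)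
    (hY : ∀ c ∈ S, ∀ i, HasNoPoleAt (Y i) c)
    (hsol : ∀ c ∈ S, ∃! X' : Fin k → ℂ,
      (Matrix.of fun i j => evalAt c (D i j)).mulVec X' = fun i => evalAt c (Y i)) :
    ∃! X : Fin k → RatFunc ℂ, D.mulVec X = Y := by
  classical
  obtain ⟨c₀, hc₀⟩ := hS.nonempty
  set alg := algebraMap (Polynomial ℂ) (RatFunc ℂ) with halg
  set q : Polynomial ℂ := (∏ i, ∏ j, (D i j).denom) * ∏ i, (Y i).denom with hqdef
  have hdvdD : ∀ i j, (D i j).denom ∣ q := by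
    intro i j
    have h1 : (D i j).denom ∣ ∏ j', (D i j').denom :=
      Finset.dvd_prod_of_mem _ (Finset.mem_univ j)
    have h2 : (∏ j', (D i j').denom) ∣ ∏ i', ∏ j', (D i' j').denom :=
      Finset.dvd_prod_of_mem (fun i' => ∏ j', (D i' j').denom) (Finset.mem_univ i)
    exact dvd_mul_of_dvd_left (h1.trans h2) _
  have hdvdY : ∀ i, (Y i).denom ∣ q :=
    fun i => dvd_mul_of_dvd_right (Finset.dvd_prod_of_mem _ (Finset.mem_univ i)) _
  have hqS : ∀ c ∈ S, q.eval c ≠ 0 := by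
    intro c hc
    rw [hqdef]
    simp only [Polynomial.eval_mul, Polynomial.eval_prod]
    exact mul_ne_zero
      (Finset.prod_ne_zero_iff.mpr fun i _ => Finset.prod_ne_zero_iff.mpr
        fun j _ => denom_eval_ne_zero (hD c hc i j))
      (Finset.prod_ne_zero_iff.mpr fun i _ => denom_eval_ne_zero (hY c hc i))
  have hq0 : q ≠ 0 := fun h0 => hqS c₀ hc₀ (by rw [h0]; simp)
  have hqF : alg q ≠ 0 := RatFunc.algebraMap_ne_zero hq0
  choose A hA1 hA2 using fun i j => clear_denom (hdvdD i j)
  choose b hb1 hb2 using fun i => clear_denom (hdvdY i)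
  -- evaluated versions
  have hA2' : ∀ c ∈ S, ∀ i j, (A i j).eval c = q.eval c * evalAt c (D i j) :=
    fun c hc i j => hA2 i j c (denom_eval_ne_zero (hD c hc i j))
  have hb2' : ∀ c ∈ S, ∀ i, (b i).eval c = q.eval c * evalAt c (Y i) :=
    fun c hc i => hb2 i c (denom_eval_ne_zero (hY c hc i))
  -- the equivalence over RatFunc
  have heq : ∀ X : Fin k → RatFunc ℂ,
      D.mulVec X = Y ↔ (Matrix.of fun i j => alg (A i j)).mulVec X = fun i => alg (b i) := by
    intro X
    rw [funext_iff, funext_iff]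
    apply forall_congr'
    intro i
    have hL : ((Matrix.of fun i j => alg (A i j)).mulVec X) i = alg q * (D.mulVec X) i := by
      simp only [Matrix.mulVec, dotProduct, Matrix.of_apply, Finset.mul_sum]
      exact Finset.sum_congr rfl fun j _ => by rw [hA1 i j]; ring
    rw [hL, hb1 i, mul_comm (Y i) (alg q)]
    exact (mul_right_inj' hqF).symm
  -- evaluated unique solvability
  have hsolA : ∀ c ∈ S, ∃! X' : Fin k → ℂ,
      (Matrix.of fun i j => (A i j).eval c).mulVec X' = fun i => (b i).eval c := by
    intro c hc
    refine (existsUnique_congr ?_).mpr (hsol c hc)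
    intro X'
    rw [funext_iff, funext_iff]
    apply forall_congr'
    intro i
    have hL : ((Matrix.of fun i j => (A i j).eval c).mulVec X') i
        = q.eval c * (((Matrix.of fun i j => evalAt c (D i j)).mulVec X') i) := by
      simp only [Matrix.mulVec, dotProduct, Matrix.of_apply, Finset.mul_sum]
      exact Finset.sum_congr rfl fun j _ => by rw [hA2' c hc i j]; ring
    rw [hL, hb2' c hc i]
    exact mul_right_inj' (hqS c hc)
  -- reduce to polynomial-cleared system
  rw [existsUnique_congr heq]
  set AF : Matrix (Fin m) (Fin k) (RatFunc ℂ) := Matrix.of fun i j => alg (A i j) with hAF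
  set bF : Fin m → RatFunc ℂ := fun i => alg (b i) with hbF
  have hAFmap : AF = (Matrix.of A).map alg := rfl
  -- evaluation of the polynomial system at points of S
  have hpick : ∀ g : Polynomial ℂ, g ≠ 0 → ∃ c ∈ S, g.eval c ≠ 0 := by
    intro g hg
    obtain ⟨c, hc⟩ := (hS.diff (Polynomial.finite_setOf_isRoot hg)).nonempty
    exact ⟨c, hc.1, hc.2⟩
  -- kernel triviality
  have hker : ∀ v : Fin k → RatFunc ℂ, AF.mulVec v = 0 → v = 0 := by
    intro v hv
    by_contra hvne
    obtain ⟨j0, hj0⟩ := Function.ne_iff.mp hvne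
    set d : Polynomial ℂ := ∏ j, (v j).denom with hd
    have hd0 : d ≠ 0 := Finset.prod_ne_zero_iff.mpr fun j _ => (v j).denom_ne_zero
    have hdF : alg d ≠ 0 := RatFunc.algebraMap_ne_zero hd0
    choose w hw1 _ using fun j =>
      clear_denom (f := v j)
        (Finset.dvd_prod_of_mem (fun j' => (v j').denom) (Finset.mem_univ j))
    have hw0 : w j0 ≠ 0 := by
      intro h0
      apply hj0
      have := hw1 j0
      rw [h0, map_zero] at this
      rcases mul_eq_zero.mp this.symm with h | h
      · exact h
      · exact absurd h hdF
    have hAw : (Matrix.of A).mulVec w = 0 := by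
      funext i
      apply algMap_inj
      simp only [Pi.zero_apply, map_zero]
      rw [RingHom.map_mulVec alg (Matrix.of A) w i, ← hAFmap]
      have : (alg ∘ w) = fun j => v j * alg d := by
        funext j; exact hw1 j
      rw [this]
      have hsum : (AF.mulVec fun j => v j * alg d) i = alg d * (AF.mulVec v) i := by
        simp only [Matrix.mulVec, dotProduct, Finset.mul_sum]
        exact Finset.sum_congr rfl fun j _ => by ring
      rw [hsum, hv]
      simp
    obtain ⟨c, hcS, hcne⟩ := hpick (w j0) hw0
    obtain ⟨X0, hX0, hu⟩ := hsolA c hcS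
    have hsol2 : (Matrix.of fun i j => (A i j).eval c).mulVec
        (fun j => X0 j + (w j).eval c) = fun i => (b i).eval c := by
      funext i
      have hz : ((Matrix.of fun i j => (A i j).eval c).mulVec fun j => (w j).eval c) i = 0 := by
        have h2 : ((Matrix.of fun i j => (A i j).eval c).mulVec fun j => (w j).eval c) i
            = Polynomial.evalRingHom c ((Matrix.of A).mulVec w i) :=
          (RingHom.map_mulVec (Polynomial.evalRingHom c) (Matrix.of A) w i).symm
        rw [h2, congrFun hAw i]
        simp
      have hadd : ((Matrix.of fun i j => (A i j).eval c).mulVec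
          fun j => X0 j + (w j).eval c) i
          = ((Matrix.of fun i j => (A i j).eval c).mulVec X0) i
            + ((Matrix.of fun i j => (A i j).eval c).mulVec fun j => (w j).eval c) i := by
        simp only [Matrix.mulVec, dotProduct, ← Finset.sum_add_distrib]
        exact Finset.sum_congr rfl fun j _ => by ring
      rw [hadd, hz, congrFun hX0 i, add_zero]
    have := congrFun (hu _ hsol2) j0
    apply hcne
    have := congrArg (fun t => t - X0 j0) this
    simpa using this
  -- existence
  have hex : ∃ X : Fin k → RatFunc ℂ, AF.mulVec X = bF := by
    by_contra hne
    push_neg at hne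
    have hnmem : bF ∉ LinearMap.range (Matrix.mulVecLin AF) := by
      intro hmem
      obtain ⟨X, hX⟩ := hmem
      exact hne X (by rw [← Matrix.mulVecLin_apply]; exact hX)
    obtain ⟨f, hfb, hmap⟩ :=
      Submodule.exists_dual_map_eq_bot_of_notMem hnmem inferInstance
    have hfrange : ∀ y ∈ LinearMap.range (Matrix.mulVecLin AF), f y = 0 := by
      intro y hy
      have : f y ∈ Submodule.map f (LinearMap.range (Matrix.mulVecLin AF)) :=
        Submodule.mem_map_of_mem hy
      rw [hmap] at this
      exact (Submodule.mem_bot _).mp this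
    set u : Fin m → RatFunc ℂ :=
      fun i => f (fun i' => if i = i' then 1 else 0) with hu
    have hfu : ∀ y : Fin m → RatFunc ℂ, f y = dotProduct u y := by
      intro y
      rw [LinearMap.pi_apply_eq_sum_univ f y, dotProduct]
      exact Finset.sum_congr rfl fun i _ => by rw [smul_eq_mul, mul_comm]
    have hvecMul : Matrix.vecMul u AF = 0 := by
      funext j
      show dotProduct u (fun i => AF i j) = 0
      rw [← hfu]
      apply hfrange
      refine ⟨Pi.single j 1, ?_⟩
      rw [Matrix.mulVecLin_apply, Matrix.mulVec_single]
      simp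
      rfl
    set e : Polynomial ℂ := ∏ i, (u i).denom with he
    have he0 : e ≠ 0 := Finset.prod_ne_zero_iff.mpr fun i _ => (u i).denom_ne_zero
    have heF : alg e ≠ 0 := RatFunc.algebraMap_ne_zero he0
    choose w hw1 _ using fun i =>
      clear_denom (f := u i)
        (Finset.dvd_prod_of_mem (fun i' => (u i').denom) (Finset.mem_univ i))
    have hwA : Matrix.vecMul w (Matrix.of A) = 0 := by
      funext j
      apply algMap_inj
      simp only [Pi.zero_apply, map_zero]
      rw [RingHom.map_vecMul alg (Matrix.of A) w j, ← hAFmap]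
      have hwe : (alg ∘ w) = fun i => u i * alg e := by
        funext i; exact hw1 i
      rw [hwe]
      have : (Matrix.vecMul (fun i => u i * alg e) AF) j
          = alg e * (Matrix.vecMul u AF) j := by
        simp only [Matrix.vecMul, dotProduct, Finset.mul_sum]
        exact Finset.sum_congr rfl fun i _ => by ring
      rw [this, hvecMul]
      simp
    set g : Polynomial ℂ := dotProduct w b with hg
    have hg0 : g ≠ 0 := by
      intro h0
      have : alg g = alg e * f bF := by
        rw [hg, RingHom.map_dotProduct alg w b]
        have hwe : (alg ∘ w) = fun i => u i * alg e := by
          funext i; exact hw1 i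
        have hbe : (alg ∘ b) = bF := rfl
        rw [hwe, hbe, hfu bF]
        simp only [dotProduct, Finset.mul_sum]
        exact Finset.sum_congr rfl fun i _ => by ring
      rw [h0, map_zero] at this
      rcases mul_eq_zero.mp this.symm with h | h
      · exact heF h
      · exact hfb h
    obtain ⟨c, hcS, hcne⟩ := hpick g hg0
    obtain ⟨X', hX', -⟩ := hsolA c hcS
    apply hcne
    have hgc : g.eval c
        = dotProduct (fun i => (w i).eval c) (fun i => (b i).eval c) :=
      RingHom.map_dotProduct (Polynomial.evalRingHom c) w b
    rw [hgc, ← hX']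
    rw [Matrix.dotProduct_mulVec]
    have hwAc : Matrix.vecMul (fun i => (w i).eval c)
        (Matrix.of fun i j => (A i j).eval c) = 0 := by
      funext j
      have h2 : Matrix.vecMul (fun i => (w i).eval c)
          (Matrix.of fun i j => (A i j).eval c) j
          = Polynomial.evalRingHom c (Matrix.vecMul w (Matrix.of A) j) :=
        (RingHom.map_vecMul (Polynomial.evalRingHom c) (Matrix.of A) w j).symm
      rw [h2, congrFun hwA j]
      simp
    rw [hwAc]
    simp
  obtain ⟨X, hX⟩ := hex
  refine ⟨X, hX, ?_⟩
  intro X' hX'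
  have : AF.mulVec (X' - X) = 0 := by
    have : AF.mulVec X' - AF.mulVec X = 0 := by rw [hX, hX']; simp
    rw [← this]
    simp [Matrix.mulVec_sub]
  have := hker _ this
  exact sub_eq_zero.mp this
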